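/- Let A be a homogeneous set with measure μ. Then for every x ∈ A, |log N(A,r)/(−log r) − log μ(B(x,r))/log r| = O(1/|log r|) as r → 0; that is, the function f_A(r) = log N(A,r)/(−log r) is equivalent to α_A(x,r) for every x ∈ A. -/

import Mathlib

open scoped ENNReal

noncomputable section

open Filter MeasureTheory

/-- A compact set `A` is *homogeneous* with respect to the Borel probability measure `μ`
supported on `A` and constants `lam ≥ 1`, `kappa ∈ (0,1)`, `1 < del ≤ Del`. -/
structure IsHomog {X : Type*} [MetricSpace X] [MeasurableSpace X]
    (A : Set X) (μ : Measure X) (lam kappa del Del : ℝ) : Prop where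
  compact : IsCompact A
  diam_pos : 0 < Metric.diam A
  prob : IsProbabilityMeasure μ
  supp_null : μ Aᶜ = 0
  supp_pos : ∀ x ∈ A, ∀ r : ℝ, 0 < r → 0 < μ (Metric.closedBall x r)
  one_le_lam : 1 ≤ lam
  ratio_le : ∀ x₁ ∈ A, ∀ x₂ ∈ A, ∀ r : ℝ, 0 < r → r ≤ Metric.diam A →
    (μ (Metric.closedBall x₁ r)).toReal ≤ lam * (μ (Metric.closedBall x₂ r)).toReal
  kappa_pos : 0 < kappa
  kappa_lt_one : kappa < 1
  one_lt_del : 1 < del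
  del_le_Del : del ≤ Del
  scale_lower : ∀ x ∈ A, ∀ r : ℝ, 0 < r → r ≤ Metric.diam A →
    del * (μ (Metric.closedBall x (kappa * r))).toReal ≤ (μ (Metric.closedBall x r)).toReal
  scale_upper : ∀ x ∈ A, ∀ r : ℝ, 0 < r → r ≤ Metric.diam A →
    (μ (Metric.closedBall x r)).toReal ≤ Del * (μ (Metric.closedBall x (kappa * r))).toReal

/-- `alphaPt μ x r = log μ(B(x,r)) / log r`. -/
def alphaPt {X : Type*} [MetricSpace X] [MeasurableSpace X]
    (μ : Measure X) (x : X) (r : ℝ) : ℝ :=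
  Real.log (μ (Metric.closedBall x r)).toReal / Real.log r

/-- `g ∼ h` : `|h r - g r| = O(1/|log r|)` as `r → 0⁺`. -/
def EquivNearZero (g h : ℝ → ℝ) : Prop :=
  ∃ C : ℝ, 0 < C ∧ ∃ δ : ℝ, 0 < δ ∧ ∀ r : ℝ, 0 < r → r < δ → |h r - g r| ≤ C / |Real.log r|

/-- `g` is a representative of the equivalence class `[α_A(x,·)]` of the homogeneous set `A`. -/
def IsAlphaRep {X : Type*} [MetricSpace X] [MeasurableSpace X]
    (A : Set X) (μ : Measure X) (g : ℝ → ℝ) : Prop :=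
  ∃ x ∈ A, EquivNearZero g (fun r => alphaPt μ x r)

/-- `χ(A,B)` computed from representatives `g` of `[α_A]` and `h` of `[α_B]`. -/
def chiFun (g h : ℝ → ℝ) : ℝ :=
  Filter.limsup (fun r => |Real.log (g r / h r)|) (nhdsWithin (0 : ℝ) (Set.Ioi 0))

/-- `N(A,r)`: the smallest number of closed balls of radius `r` needed to cover `A`. -/
def coverNum {X : Type*} [MetricSpace X] (A : Set X) (r : ℝ) : ℕ :=
  sInf {m : ℕ | ∃ s : Finset X, s.card = m ∧ A ⊆ ⋃ x ∈ s, Metric.closedBall x r}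

/-- Lower box-counting dimension. -/
def lowerBoxDim {X : Type*} [MetricSpace X] (A : Set X) : ℝ :=
  Filter.liminf (fun r : ℝ => Real.log (coverNum A r : ℝ) / (-Real.log r))
    (nhdsWithin (0 : ℝ) (Set.Ioi 0))

/-- Upper box-counting dimension. -/
def upperBoxDim {X : Type*} [MetricSpace X] (A : Set X) : ℝ :=
  Filter.limsup (fun r : ℝ => Real.log (coverNum A r : ℝ) / (-Real.log r))
    (nhdsWithin (0 : ℝ) (Set.Ioi 0))

/-- Radius-based packing premeasure. -/
def packPre {X : Type*} [MetricSpace X] (A : Set X) (s : ℝ) : ℝ≥0∞ :=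
  ⨅ (δ : ℝ) (_ : 0 < δ),
    ⨆ (m : ℕ) (x : Fin m → X) (ρ : Fin m → ℝ) (_ : ∀ i, x i ∈ A)
      (_ : ∀ i, 0 < ρ i ∧ ρ i ≤ δ)
      (_ : ∀ i j, i ≠ j →
        Disjoint (Metric.closedBall (x i) (ρ i)) (Metric.closedBall (x j) (ρ j))),
      ∑ i, ENNReal.ofReal (ρ i ^ s)

/-- Radius-based packing measure. -/
def packMeasure {X : Type*} [MetricSpace X] (A : Set X) (s : ℝ) : ℝ≥0∞ :=
  ⨅ (F : ℕ → Set X) (_ : A ⊆ ⋃ m, F m), ∑' m, packPre (F m) s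

/-- Radius-based packing dimension. -/
def packDim {X : Type*} [MetricSpace X] (A : Set X) : ℝ :=
  sInf {s : ℝ | 0 ≤ s ∧ packMeasure A s = 0}

/-- Distance between two sets, valued in `ℝ≥0∞`. -/
def setDistE {X : Type*} [MetricSpace X] (E F : Set X) : ℝ≥0∞ :=
  ⨅ (a : X) (_ : a ∈ E) (b : X) (_ : b ∈ F), edist a b

/-- Uniformly disconnected set. -/
def UnifDisconn {X : Type*} [MetricSpace X] (A : Set X) : Prop :=
  ∃ C : ℝ, 1 < C ∧ ∃ rstar : ℝ, 0 < rstar ∧ ∀ x ∈ A, ∀ r : ℝ, 0 < r → r < rstar →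
    ∃ E : Set X, E ⊆ A ∧ A ∩ Metric.closedBall x r ⊆ E ∧
      E ⊆ Metric.closedBall x (C * r) ∧ ENNReal.ofReal r < setDistE E (A \ E)

/-- `A` can be bilipschitz embedded into `B`. -/
def BilipEmbed {X Y : Type*} [MetricSpace X] [MetricSpace Y] (A : Set X) (B : Set Y) : Prop :=
  ∃ (f : X → Y) (L : ℝ), 1 ≤ L ∧ Set.MapsTo f A B ∧ Set.InjOn f A ∧
    ∀ x₁ ∈ A, ∀ x₂ ∈ A,
      dist x₁ x₂ / L ≤ dist (f x₁) (f x₂) ∧ dist (f x₁) (f x₂) ≤ L * dist x₁ x₂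

/-- `A` and `B` are bilipschitz equivalent. -/
def BilipEquivSets {X Y : Type*} [MetricSpace X] [MetricSpace Y] (A : Set X) (B : Set Y) :
    Prop :=
  ∃ (f : X → Y) (L : ℝ), 1 ≤ L ∧ Set.BijOn f A B ∧
    ∀ x₁ ∈ A, ∀ x₂ ∈ A,
      dist x₁ x₂ / L ≤ dist (f x₁) (f x₂) ∧ dist (f x₁) (f x₂) ≤ L * dist x₁ x₂

/-- `A` and `B` are quasi-Lipschitz equivalent. -/
def QuasiLipEquiv {X Y : Type*} [MetricSpace X] [MetricSpace Y] (A : Set X) (B : Set Y) : Prop :=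
  ∃ f : X → Y, Set.BijOn f A B ∧
    ∀ ε : ℝ, 0 < ε → ∃ δ : ℝ, 0 < δ ∧ ∀ x₁ ∈ A, ∀ x₂ ∈ A,
      0 < dist x₁ x₂ → dist x₁ x₂ < δ →
      |Real.log (dist (f x₁) (f x₂)) / Real.log (dist x₁ x₂) - 1| < ε

/-- Ahlfors–David `s`-regular set. -/
def IsADRegular {X : Type*} [MetricSpace X] [MeasurableSpace X] (A : Set X) (s : ℝ) : Prop :=
  IsCompact A ∧ 0 < Metric.diam A ∧
    ∃ (μ : Measure X) (c : ℝ), 1 ≤ c ∧ μ Aᶜ = 0 ∧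
      ∀ x ∈ A, ∀ r : ℝ, 0 < r → r ≤ Metric.diam A →
        ENNReal.ofReal (c⁻¹ * r ^ s) ≤ μ (Metric.closedBall x r) ∧
          μ (Metric.closedBall x r) ≤ ENNReal.ofReal (c * r ^ s)

/-- `n₁ ⋯ n_k` (with `0`-based indexing of the sequence `n`). -/
def prodN (n : ℕ → ℕ) (k : ℕ) : ℕ := ∏ i ∈ Finset.range k, n i

/-- `c₁ ⋯ c_k` (with `0`-based indexing of the sequence `c`). -/
def prodC (c : ℕ → ℝ) (k : ℕ) : ℝ := ∏ i ∈ Finset.range k, c i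

/-- Admissible word for the branching sequence `n`. -/
def AdmWord (n : ℕ → ℕ) (w : List ℕ) : Prop := ∀ i : Fin w.length, w.get i < n i.val

/-- A Moran structure on `J ⊆ ℝ^d` with branching numbers `n` and ratios `c`:
`Jw w` is the basic set indexed by the word `w`. -/
structure IsMoranSystem {d : ℕ} (J : Set (EuclideanSpace ℝ (Fin d))) (n : ℕ → ℕ)
    (c : ℕ → ℝ) (Jw : List ℕ → Set (EuclideanSpace ℝ (Fin d))) : Prop where
  compact : IsCompact J
  int_nonempty : (interior J).Nonempty
  two_le_n : ∀ k, 2 ≤ n k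
  c_pos : ∀ k, 0 < c k
  c_lt_one : ∀ k, c k < 1
  c_inf_pos : ∃ c₀ : ℝ, 0 < c₀ ∧ ∀ k, c₀ ≤ c k
  root : Jw [] = J
  subset : ∀ w : List ℕ, AdmWord n w → ∀ i : ℕ, i < n w.length → Jw (w ++ [i]) ⊆ Jw w
  similar : ∀ w : List ℕ, AdmWord n w → ∀ i : ℕ, i < n w.length →
    ∃ S : EuclideanSpace ℝ (Fin d) → EuclideanSpace ℝ (Fin d),
      (∀ x y, dist (S x) (S y) = c w.length * dist x y) ∧ Jw (w ++ [i]) = S '' Jw w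
  disj_int : ∀ w : List ℕ, AdmWord n w → ∀ i : ℕ, i < n w.length → ∀ j : ℕ, j < n w.length →
    i ≠ j → Disjoint (interior (Jw (w ++ [i]))) (interior (Jw (w ++ [j])))

/-- The Moran set determined by the family `Jw`. -/
def moranSet {d : ℕ} (n : ℕ → ℕ) (Jw : List ℕ → Set (EuclideanSpace ℝ (Fin d))) :
    Set (EuclideanSpace ℝ (Fin d)) :=
  ⋂ k : ℕ, ⋃ (w : List ℕ) (_ : w.length = k ∧ AdmWord n w), Jw w

/-- The index `k` such that `(c₁⋯c_k)·D < r ≤ (c₁⋯c_{k-1})·D`. -/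
def levelOf (c : ℕ → ℝ) (D r : ℝ) : ℕ := sInf {k : ℕ | prodC c k * D < r}

/-- `Φ(r) = n₁⋯n_k` whenever `(c₁⋯c_k)·D < r ≤ (c₁⋯c_{k-1})·D`, where `D = |J|`. -/
def Phi (n : ℕ → ℕ) (c : ℕ → ℝ) (D r : ℝ) : ℕ := prodN n (levelOf c D r)

/-- For a homogeneous set `A` and every `x ∈ A`,
`f_A(r) = log N(A,r)/(−log r)` is equivalent to `α_A(x,r)`, i.e.
`|log N(A,r)/(−log r) − log μ(B(x,r))/log r| = O(1/|log r|)` as `r → 0`. -/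
theorem statement3 {X : Type*} [MetricSpace X] [MeasurableSpace X] [BorelSpace X]
    (A : Set X) (μ : Measure X) (lam kappa del Del : ℝ)
    (hA : IsHomog A μ lam kappa del Del) :
    ∀ x ∈ A, EquivNearZero (fun r : ℝ => Real.log (coverNum A r : ℝ) / (-Real.log r))
      (fun r => alphaPt μ x r) := by
  obtain ⟨hcomp, hdiam, hprob, hnull, hpos, hlam1, hratio, hκpos, hκlt, hdel, hdD, hsl, hsu⟩ := hA
  haveI := hprob
  intro x hx
  classical
  set D := Metric.diam A with hD
  have hfin : ∀ s : Set X, μ s ≠ ⊤ := fun s => measure_ne_top μ s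
  set m : ℝ → ℝ := fun t => (μ (Metric.closedBall x t)).toReal with hm
  have m_pos : ∀ t : ℝ, 0 < t → 0 < m t := fun t ht =>
    ENNReal.toReal_pos (hpos x hx t ht).ne' (hfin _)
  have m_mono : ∀ {t t' : ℝ}, t ≤ t' → m t ≤ m t' := fun h =>
    ENNReal.toReal_mono (hfin _) (measure_mono (Metric.closedBall_subset_closedBall h))
  have hDel1 : 1 < Del := lt_of_lt_of_le hdel hdD
  have hDel0 : 0 < Del := by linarith
  have hlam0 : 0 < lam := by linarith
  -- iterated scaling
  have iter : ∀ j : ℕ, ∀ t : ℝ, 0 < t → t ≤ D → m t ≤ Del ^ j * m (kappa ^ j * t) := by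
    intro j
    induction j with
    | zero => intro t ht hd; simp
    | succ j ih =>
      intro t ht hd
      have hκt : 0 < kappa * t := mul_pos hκpos ht
      have hκtd : kappa * t ≤ D := le_trans (by nlinarith) hd
      have h1 : m t ≤ Del * m (kappa * t) := hsu x hx t ht hd
      have h2 := ih (kappa * t) hκt hκtd
      have harg : kappa ^ j * (kappa * t) = kappa ^ (j + 1) * t := by ring
      rw [harg] at h2
      calc m t ≤ Del * m (kappa * t) := h1
        _ ≤ Del * (Del ^ j * m (kappa ^ (j + 1) * t)) :=
            mul_le_mul_of_nonneg_left h2 hDel0.le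
        _ = Del ^ (j + 1) * m (kappa ^ (j + 1) * t) := by ring
  obtain ⟨n₀, hn₀⟩ := exists_pow_lt_of_lt_one (by norm_num : (0:ℝ) < 1/2) hκlt
  set K : ℝ := Del ^ n₀ with hKdef
  have hK1 : 1 ≤ K := one_le_pow₀ hDel1.le
  have hK0 : 0 < K := by linarith
  have doubling : ∀ t : ℝ, 0 < t → 2 * t ≤ D → m (2 * t) ≤ K * m t := by
    intro t ht h2t
    have h1 := iter n₀ (2 * t) (by linarith) h2t
    have hκn : (0:ℝ) ≤ kappa ^ n₀ := pow_nonneg hκpos.le n₀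
    have harg : kappa ^ n₀ * (2 * t) ≤ t := by nlinarith
    calc m (2 * t) ≤ Del ^ n₀ * m (kappa ^ n₀ * (2 * t)) := h1
      _ ≤ K * m t := mul_le_mul_of_nonneg_left (m_mono harg) (by positivity)
  have hC0 : 0 < lam * K := by positivity
  have hC1 : 1 ≤ lam * K := one_le_mul_of_one_le_of_one_le hlam1 hK1
  have hA1 : (1:ℝ≥0∞) ≤ μ A := by
    have h := measure_union_le (μ := μ) A Aᶜ
    rw [Set.union_compl_self, measure_univ, hnull, add_zero] at h
    exact h
  -- the key two-sided bound
  have key : ∀ r : ℝ, 0 < r → 2 * r ≤ D →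
      1 / (lam * K) ≤ (coverNum A r : ℝ) * m r ∧ (coverNum A r : ℝ) * m r ≤ lam * K := by
    intro r hr h2rD
    have hrD : r ≤ D := by linarith
    have hr2D : r / 2 ≤ D := by linarith
    have hmr := m_pos r hr
    have hmr2 := m_pos (r/2) (by linarith)
    -- a finite cover exists
    have hcovex : ∃ s : Finset X, A ⊆ ⋃ y ∈ s, Metric.closedBall y r := by
      obtain ⟨t, ht⟩ := hcomp.elim_finite_subcover (fun a : X => Metric.ball a r)
        (fun a => Metric.isOpen_ball)
        (fun a _ => Set.mem_iUnion.mpr ⟨a, Metric.mem_ball_self hr⟩)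
      exact ⟨t, ht.trans (Set.iUnion₂_mono fun a _ => Metric.ball_subset_closedBall)⟩
    have hne : {k : ℕ | ∃ s : Finset X, s.card = k ∧
        A ⊆ ⋃ y ∈ s, Metric.closedBall y r}.Nonempty := by
      obtain ⟨s, hs⟩ := hcovex; exact ⟨s.card, s, rfl, hs⟩
    obtain ⟨s, hscard, hscov⟩ := Nat.sInf_mem hne
    -- lower bound: 1 ≤ N · (lam·K·m r)
    have hterm : ∀ y ∈ s, (μ (Metric.closedBall y r)).toReal ≤ lam * K * m r := by
      intro y _
      rcases Set.eq_empty_or_nonempty (Metric.closedBall y r ∩ A) with hempty | ⟨a, haB, haA⟩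
      · have h0 : μ (Metric.closedBall y r) = 0 := by
          apply measure_mono_null _ hnull
          intro z hz hzA
          exact Set.eq_empty_iff_forall_notMem.mp hempty z ⟨hz, hzA⟩
        rw [h0]; simp; positivity
      · have hsub : Metric.closedBall y r ⊆ Metric.closedBall a (2 * r) := by
          apply Metric.closedBall_subset_closedBall'
          have hda : dist a y ≤ r := Metric.mem_closedBall.mp haB
          rw [dist_comm] at hda
          linarith
        calc (μ (Metric.closedBall y r)).toReal
            ≤ (μ (Metric.closedBall a (2 * r))).toReal :=
              ENNReal.toReal_mono (hfin _) (measure_mono hsub)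
          _ ≤ lam * m (2 * r) := hratio a haA x hx (2 * r) (by linarith) h2rD
          _ ≤ lam * (K * m r) := mul_le_mul_of_nonneg_left (doubling r hr h2rD) hlam0.le
          _ = lam * K * m r := by ring
    have hsumfin : ∑ y ∈ s, μ (Metric.closedBall y r) ≠ ⊤ := by
      intro h
      rcases ENNReal.sum_eq_top.mp h with ⟨y, _, hy⟩
      exact hfin _ hy
    have h1le : (1:ℝ≥0∞) ≤ ∑ y ∈ s, μ (Metric.closedBall y r) :=
      le_trans hA1 (le_trans (measure_mono hscov) (measure_biUnion_finset_le s _))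
    have h1ler : (1:ℝ) ≤ ∑ y ∈ s, (μ (Metric.closedBall y r)).toReal := by
      have := ENNReal.toReal_mono hsumfin h1le
      rwa [ENNReal.toReal_one, ENNReal.toReal_sum (fun y _ => hfin _)] at this
    have hlower : (1:ℝ) ≤ (coverNum A r : ℝ) * (lam * K * m r) := by
      have hcard' : s.card = coverNum A r := hscard
      have := Finset.sum_le_card_nsmul s _ (lam * K * m r) hterm
      rw [nsmul_eq_mul, hcard'] at this
      linarith
    -- separated sets
    have hsep_bound : ∀ s' : Finset X, (↑s' : Set X) ⊆ A →
        (∀ y ∈ s', ∀ z ∈ s', y ≠ z → r < dist y z) →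
        (s'.card : ℝ) * m (r / 2) ≤ lam := by
      intro s' hsA hsep
      have hdisj : (↑s' : Set X).PairwiseDisjoint
          (fun y => Metric.closedBall y (r / 2)) := by
        intro y hy z hz hyz
        apply Metric.closedBall_disjoint_closedBall
        have := hsep y hy z hz hyz
        linarith
      have hsum_eq := measure_biUnion_finset (μ := μ) hdisj
        (fun y _ => measurableSet_closedBall)
      have hle1 : ∑ y ∈ s', μ (Metric.closedBall y (r / 2)) ≤ 1 := by
        rw [← hsum_eq]; exact prob_le_one
      have hle1r : ∑ y ∈ s', (μ (Metric.closedBall y (r / 2))).toReal ≤ 1 := by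
        have := ENNReal.toReal_mono ENNReal.one_ne_top hle1
        rwa [ENNReal.toReal_one, ENNReal.toReal_sum (fun y _ => hfin _)] at this
      have hlow : ∀ y ∈ s', m (r / 2) ≤ lam * (μ (Metric.closedBall y (r / 2))).toReal :=
        fun y hy => hratio x hx y (hsA hy) (r / 2) (by linarith) hr2D
      have h1 := Finset.card_nsmul_le_sum s'
        (fun y => lam * (μ (Metric.closedBall y (r / 2))).toReal) (m (r / 2)) hlow
      rw [nsmul_eq_mul, ← Finset.mul_sum] at h1
      nlinarith [hle1r]
    set S : Set ℕ := {k | ∃ s' : Finset X, (↑s' : Set X) ⊆ A ∧ s'.card = k ∧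
        ∀ y ∈ s', ∀ z ∈ s', y ≠ z → r < dist y z} with hSdef
    have hS0 : 0 ∈ S := ⟨∅, by simp, by simp, by simp⟩
    have hSbdd : BddAbove S := by
      refine ⟨Nat.ceil (lam / m (r / 2)), fun k hk => ?_⟩
      obtain ⟨s', h1, h2, h3⟩ := hk
      have hb := hsep_bound s' h1 h3
      rw [h2] at hb
      have hkv : (k:ℝ) ≤ lam / m (r / 2) := by
        rw [le_div_iff₀ hmr2]; linarith
      exact_mod_cast hkv.trans (Nat.le_ceil _)
    obtain ⟨s', hs'A, hs'card, hs'sep⟩ := Nat.sSup_mem ⟨0, hS0⟩ hSbdd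
    have hmaximal : ∀ a ∈ A, ∃ y ∈ s', dist a y ≤ r := by
      intro a ha
      by_contra hcon
      push_neg at hcon
      have hans : a ∉ s' := by
        intro h
        have := hcon a h
        simp [dist_self] at this
        linarith
      have hmem : s'.card + 1 ∈ S := by
        refine ⟨insert a s', ?_, ?_, ?_⟩
        · intro z hz
          simp only [Finset.coe_insert, Set.mem_insert_iff] at hz
          rcases hz with rfl | hz
          · exact ha
          · exact hs'A hz
        · rw [Finset.card_insert_of_notMem hans]
        · intro y hy z hz hyz
          simp only [Finset.mem_insert] at hy hz
          rcases hy with rfl | hy <;> rcases hz with rfl | hz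
          · exact absurd rfl hyz
          · exact hcon z hz
          · rw [dist_comm]; exact hcon y hy
          · exact hs'sep y hy z hz hyz
      have h := le_csSup hSbdd hmem
      omega
    have hNle : coverNum A r ≤ s'.card := by
      apply Nat.sInf_le (s := {k : ℕ | ∃ s : Finset X, s.card = k ∧
        A ⊆ ⋃ y ∈ s, Metric.closedBall y r})
      refine ⟨s', rfl, fun a ha => ?_⟩
      obtain ⟨y, hy, hd⟩ := hmaximal a ha
      exact Set.mem_biUnion hy (Metric.mem_closedBall.mpr hd)
    have hb := hsep_bound s' hs'A hs'sep
    have hdoub : m r ≤ K * m (r / 2) := by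
      have h := doubling (r / 2) (by linarith) (by linarith)
      have harg : 2 * (r / 2) = r := by ring
      rwa [harg] at h
    constructor
    · rw [div_le_iff₀ hC0]
      nlinarith [hlower]
    · calc (coverNum A r : ℝ) * m r
          ≤ (s'.card : ℝ) * m r :=
            mul_le_mul_of_nonneg_right (by exact_mod_cast hNle) hmr.le
        _ ≤ (s'.card : ℝ) * (K * m (r / 2)) :=
            mul_le_mul_of_nonneg_left hdoub (Nat.cast_nonneg _)
        _ = K * ((s'.card : ℝ) * m (r / 2)) := by ring
        _ ≤ K * lam := mul_le_mul_of_nonneg_left hb hK0.le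
        _ = lam * K := mul_comm _ _
  -- assemble
  refine ⟨Real.log (lam * K) + 1, by have := Real.log_nonneg hC1; linarith, min (D / 2) (1 / 2),
    lt_min (by linarith) (by norm_num), ?_⟩
  intro r hr hrδ
  have hr1 : r < 1 / 2 := lt_of_lt_of_le hrδ (min_le_right _ _)
  have h2rD : 2 * r ≤ D := by
    have := lt_of_lt_of_le hrδ (min_le_left _ _); linarith
  obtain ⟨hlow, hupp⟩ := key r hr h2rD
  have hlogr : Real.log r < 0 := Real.log_neg hr (by linarith)
  have hmr := m_pos r hr
  have hNpos : (0:ℝ) < (coverNum A r : ℝ) := by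
    by_contra h
    push_neg at h
    have h0 : (coverNum A r : ℝ) = 0 := le_antisymm h (Nat.cast_nonneg _)
    rw [h0, zero_mul] at hlow
    have : 0 < 1 / (lam * K) := by positivity
    linarith
  have hPpos : 0 < (coverNum A r : ℝ) * m r := mul_pos hNpos hmr
  have hlogP_le : Real.log ((coverNum A r : ℝ) * m r) ≤ Real.log (lam * K) :=
    Real.log_le_log hPpos hupp
  have hlogP_ge : -Real.log (lam * K) ≤ Real.log ((coverNum A r : ℝ) * m r) := by
    rw [← Real.log_inv]
    apply Real.log_le_log (by positivity)
    rw [inv_eq_one_div]; exact hlow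
  have key_eq : alphaPt μ x r - Real.log (coverNum A r : ℝ) / (-Real.log r)
      = Real.log ((coverNum A r : ℝ) * m r) / Real.log r := by
    show Real.log (m r) / Real.log r - Real.log (coverNum A r : ℝ) / (-Real.log r) = _
    rw [Real.log_mul hNpos.ne' hmr.ne', div_neg, sub_neg_eq_add, ← add_div, add_comm]
  have habslog : 0 < |Real.log r| := abs_pos.mpr hlogr.ne
  have habsP : |Real.log ((coverNum A r : ℝ) * m r)| ≤ Real.log (lam * K) :=
    abs_le.mpr ⟨hlogP_ge, hlogP_le⟩
  calc |alphaPt μ x r - Real.log (coverNum A r : ℝ) / (-Real.log r)|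
      = |Real.log ((coverNum A r : ℝ) * m r)| / |Real.log r| := by rw [key_eq, abs_div]
    _ ≤ Real.log (lam * K) / |Real.log r| := by gcongr
    _ ≤ (Real.log (lam * K) + 1) / |Real.log r| := by gcongr; linarith

end
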